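/- Differentiating the KKT conditions yields the Pontryagin differentiable programming equations (Corollary 4). Suppose f, ℓ, φ, ξ are twice continuously differentiable. Let θ ↦ (x_k(θ), u_k(θ), λ_k(θ))_{k} be a continuously differentiable family, defined on a neighborhood of θ₀, such that for every θ in that neighborhood the KKT conditions hold: x_0(θ) = ξ(θ); x_{k+1}(θ) = f(x_k(θ), u_k(θ), θ); λ_k(θ) = ∇_x ℓ + (D_x f)ᵀ λ_{k+1}(θ) evaluated at (x_k(θ), u_k(θ), θ); 0 = ∇_u ℓ + (D_u f)ᵀ λ_{k+1}(θ); and λ_N(θ) = ∇_x φ(x_N(θ), θ). Write H^{(k)}(x,u,θ,λ) = ℓ(x,u,θ) + λᵀ f(x,u,θ) for the stage Hamiltonian, and let 𝓛_xx^{(k)}, 𝓛_xu^{(k)}, 𝓛_ux^{(k)}, 𝓛_uu^{(k)}, 𝓛_xθ^{(k)}, 𝓛_uθ^{(k)} denote the corresponding second partial derivatives of H^{(k)} evaluated at (x_k(θ₀), u_k(θ₀), θ₀, λ_{k+1}(θ₀)). Then the Jacobians ∂x_k = Dx_k(θ₀), ∂u_k = Du_k(θ₀), ∂λ_k = Dλ_k(θ₀)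 satisfy: ∂x_0 = ξ_θ; ∂x_{k+1} = f_x ∂x_k + f_u ∂u_k + f_θ; ∂λ_k = 𝓛_xx^{(k)} ∂x_k + 𝓛_xu^{(k)} ∂u_k + f_xᵀ ∂λ_{k+1} + 𝓛_xθ^{(k)}; 0 = 𝓛_ux^{(k)} ∂x_k + 𝓛_uu^{(k)} ∂u_k + f_uᵀ ∂λ_{k+1} + 𝓛_uθ^{(k)}; and ∂λ_N = φ_xx ∂x_N + φ_xθ, where f_x, f_u, f_θ are the Jacobians of f and φ_xx, φ_xθ the second derivatives of φ, all evaluated along the trajectory at θ₀. -/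

import Mathlib

open scoped InnerProductSpace

noncomputable section

/-- Euclidean space `ℝ^n`. -/
abbrev E (n : ℕ) : Type := EuclideanSpace ℝ (Fin n)

section Helpers2
variable {n m : ℕ}
set_option linter.unusedSectionVars false in
lemma gradient_add_inner' (g : E n → ℝ) (f : E n → E m) (l : E m) (a : E n)
    (hg : DifferentiableAt ℝ g a) (hf : DifferentiableAt ℝ f a) :
    gradient (fun x => g x + ⟪l, f x⟫_ℝ) a
      = gradient g a + ContinuousLinearMap.adjoint (fderiv ℝ f a) l := by
  have h1 : HasFDerivAt (fun x => ⟪l, f x⟫_ℝ) ((innerSL ℝ l).comp (fderiv ℝ f a)) a :=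
    ((innerSL ℝ l).hasFDerivAt).comp a hf.hasFDerivAt
  have h2 : HasFDerivAt (fun x => g x + ⟪l, f x⟫_ℝ)
      (fderiv ℝ g a + (innerSL ℝ l).comp (fderiv ℝ f a)) a := hg.hasFDerivAt.add h1
  show (InnerProductSpace.toDual ℝ (E n)).symm (fderiv ℝ (fun x => g x + ⟪l, f x⟫_ℝ) a) = _
  rw [h2.fderiv, map_add]
  congr 1
end Helpers2

section Helpers
open InnerProductSpace
set_option linter.unusedSectionVars false
set_option linter.unusedVariables false
variable {k m : ℕ} {Q : Type*} [NormedAddCommGroup Q] [NormedSpace ℝ Q] [FiniteDimensional ℝ Q]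

private def gradLin2 (J : E k →L[ℝ] Q) : (Q →L[ℝ] ℝ) →ₗ[ℝ] E k where
  toFun A := (toDual ℝ (E k)).symm (A.comp J)
  map_add' A B := by simp [ContinuousLinearMap.add_comp]
  map_smul' r A := by
    simp [ContinuousLinearMap.smul_comp, map_smulₛₗ, starRingEnd_apply, star_trivial]

private def adjLin2 (J : E k →L[ℝ] Q) : (Q →L[ℝ] E m) →ₗ[ℝ] (E m →L[ℝ] E k) where
  toFun A := ContinuousLinearMap.adjoint (A.comp J)
  map_add' A B := by simp [ContinuousLinearMap.add_comp]
  map_smul' r A := by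
    simp [ContinuousLinearMap.smul_comp, map_smulₛₗ, starRingEnd_apply, star_trivial]

lemma diff_linmap {M N P' : Type*} [NormedAddCommGroup M] [NormedSpace ℝ M]
    [FiniteDimensional ℝ M] [NormedAddCommGroup N] [NormedSpace ℝ N]
    [NormedAddCommGroup P'] [NormedSpace ℝ P'] (L : M →ₗ[ℝ] N) {g : P' → M}
    (hg : Differentiable ℝ g) : Differentiable ℝ fun x => L (g x) :=
  (LinearMap.toContinuousLinearMap L).differentiable.comp hg

lemma diff_Kx {n1 n2 n3 : ℕ} (f : E n1 → E n2 → E n3 → E n1) (ℓ : E n1 → E n2 → E n3 → ℝ)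
    (hf : ContDiff ℝ 2 fun p : E n1 × E n2 × E n3 => f p.1 p.2.1 p.2.2)
    (hℓ : ContDiff ℝ 2 fun p : E n1 × E n2 × E n3 => ℓ p.1 p.2.1 p.2.2) :
    Differentiable ℝ (fun p : E n1 × E n2 × E n3 × E n1 =>
      gradient (fun x' => ℓ x' p.2.1 p.2.2.1) p.1
        + ContinuousLinearMap.adjoint
            (fderiv ℝ (fun x' => f x' p.2.1 p.2.2.1) p.1) p.2.2.2) := by
  have hLd : Differentiable ℝ (fun p : E n1 × E n2 × E n3 => ℓ p.1 p.2.1 p.2.2) :=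
    hℓ.differentiable (by norm_num)
  have hFd : Differentiable ℝ (fun p : E n1 × E n2 × E n3 => f p.1 p.2.1 p.2.2) :=
    hf.differentiable (by norm_num)
  have hL1 : Differentiable ℝ (fderiv ℝ (fun p : E n1 × E n2 × E n3 => ℓ p.1 p.2.1 p.2.2)) :=
    (hℓ.fderiv_right (m := 1) (by norm_num)).differentiable one_ne_zero
  have hF1 : Differentiable ℝ (fderiv ℝ (fun p : E n1 × E n2 × E n3 => f p.1 p.2.1 p.2.2)) :=
    (hf.fderiv_right (m := 1) (by norm_num)).differentiable one_ne_zero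
  have hpℓ : ∀ (b : E n2) (c : E n3) (a : E n1), HasFDerivAt (fun x' => ℓ x' b c)
      ((fderiv ℝ (fun p : E n1 × E n2 × E n3 => ℓ p.1 p.2.1 p.2.2) (a, b, c)).comp
        ((ContinuousLinearMap.id ℝ (E n1)).prod 0)) a := fun b c a =>
    (hLd (a, b, c)).hasFDerivAt.comp (f := fun x => (x, b, c)) a ((hasFDerivAt_id a).prodMk (hasFDerivAt_const (b, c) a))
  have hpf : ∀ (b : E n2) (c : E n3) (a : E n1), HasFDerivAt (fun x' => f x' b c)
      ((fderiv ℝ (fun p : E n1 × E n2 × E n3 => f p.1 p.2.1 p.2.2) (a, b, c)).comp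
        ((ContinuousLinearMap.id ℝ (E n1)).prod 0)) a := fun b c a =>
    (hFd (a, b, c)).hasFDerivAt.comp (f := fun x => (x, b, c)) a ((hasFDerivAt_id a).prodMk (hasFDerivAt_const (b, c) a))
  have heq : (fun p : E n1 × E n2 × E n3 × E n1 =>
      gradient (fun x' => ℓ x' p.2.1 p.2.2.1) p.1
        + ContinuousLinearMap.adjoint
            (fderiv ℝ (fun x' => f x' p.2.1 p.2.2.1) p.1) p.2.2.2)
      = fun p =>
        gradLin2 ((ContinuousLinearMap.id ℝ (E n1)).prod (0 : E n1 →L[ℝ] E n2 × E n3))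
          (fderiv ℝ (fun p : E n1 × E n2 × E n3 => ℓ p.1 p.2.1 p.2.2) (p.1, p.2.1, p.2.2.1))
        + adjLin2 ((ContinuousLinearMap.id ℝ (E n1)).prod (0 : E n1 →L[ℝ] E n2 × E n3))
            (fderiv ℝ (fun p : E n1 × E n2 × E n3 => f p.1 p.2.1 p.2.2) (p.1, p.2.1, p.2.2.1))
            p.2.2.2 := by
    funext p
    rw [show gradient (fun x' => ℓ x' p.2.1 p.2.2.1) p.1
        = (toDual ℝ (E n1)).symm (fderiv ℝ (fun x' => ℓ x' p.2.1 p.2.2.1) p.1) from rfl,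
      (hpℓ p.2.1 p.2.2.1 p.1).fderiv, (hpf p.2.1 p.2.2.1 p.1).fderiv]
    rfl
  rw [heq]
  apply Differentiable.add
  · exact diff_linmap _ (hL1.comp (by fun_prop))
  · exact Differentiable.clm_apply (diff_linmap _ (hF1.comp (by fun_prop))) (by fun_prop)

lemma diff_Ku {n1 n2 n3 : ℕ} (f : E n1 → E n2 → E n3 → E n1) (ℓ : E n1 → E n2 → E n3 → ℝ)
    (hf : ContDiff ℝ 2 fun p : E n1 × E n2 × E n3 => f p.1 p.2.1 p.2.2)
    (hℓ : ContDiff ℝ 2 fun p : E n1 × E n2 × E n3 => ℓ p.1 p.2.1 p.2.2) :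
    Differentiable ℝ (fun p : E n1 × E n2 × E n3 × E n1 =>
      gradient (fun u' => ℓ p.1 u' p.2.2.1) p.2.1
        + ContinuousLinearMap.adjoint
            (fderiv ℝ (fun u' => f p.1 u' p.2.2.1) p.2.1) p.2.2.2) := by
  have hLd : Differentiable ℝ (fun p : E n1 × E n2 × E n3 => ℓ p.1 p.2.1 p.2.2) :=
    hℓ.differentiable (by norm_num)
  have hFd : Differentiable ℝ (fun p : E n1 × E n2 × E n3 => f p.1 p.2.1 p.2.2) :=
    hf.differentiable (by norm_num)
  have hL1 : Differentiable ℝ (fderiv ℝ (fun p : E n1 × E n2 × E n3 => ℓ p.1 p.2.1 p.2.2)) :=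
    (hℓ.fderiv_right (m := 1) (by norm_num)).differentiable one_ne_zero
  have hF1 : Differentiable ℝ (fderiv ℝ (fun p : E n1 × E n2 × E n3 => f p.1 p.2.1 p.2.2)) :=
    (hf.fderiv_right (m := 1) (by norm_num)).differentiable one_ne_zero
  have hpℓ : ∀ (a : E n1) (c : E n3) (b : E n2), HasFDerivAt (fun u' => ℓ a u' c)
      ((fderiv ℝ (fun p : E n1 × E n2 × E n3 => ℓ p.1 p.2.1 p.2.2) (a, b, c)).comp
        ((0 : E n2 →L[ℝ] E n1).prod ((ContinuousLinearMap.id ℝ (E n2)).prod 0))) b :=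
    fun a c b => (hLd (a, b, c)).hasFDerivAt.comp (f := fun x => (a, x, c)) b
      ((hasFDerivAt_const a b).prodMk ((hasFDerivAt_id b).prodMk (hasFDerivAt_const c b)))
  have hpf : ∀ (a : E n1) (c : E n3) (b : E n2), HasFDerivAt (fun u' => f a u' c)
      ((fderiv ℝ (fun p : E n1 × E n2 × E n3 => f p.1 p.2.1 p.2.2) (a, b, c)).comp
        ((0 : E n2 →L[ℝ] E n1).prod ((ContinuousLinearMap.id ℝ (E n2)).prod 0))) b :=
    fun a c b => (hFd (a, b, c)).hasFDerivAt.comp (f := fun x => (a, x, c)) b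
      ((hasFDerivAt_const a b).prodMk ((hasFDerivAt_id b).prodMk (hasFDerivAt_const c b)))
  have heq : (fun p : E n1 × E n2 × E n3 × E n1 =>
      gradient (fun u' => ℓ p.1 u' p.2.2.1) p.2.1
        + ContinuousLinearMap.adjoint
            (fderiv ℝ (fun u' => f p.1 u' p.2.2.1) p.2.1) p.2.2.2)
      = fun p =>
        gradLin2 ((0 : E n2 →L[ℝ] E n1).prod
            ((ContinuousLinearMap.id ℝ (E n2)).prod (0 : E n2 →L[ℝ] E n3)))
          (fderiv ℝ (fun p : E n1 × E n2 × E n3 => ℓ p.1 p.2.1 p.2.2) (p.1, p.2.1, p.2.2.1))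
        + adjLin2 ((0 : E n2 →L[ℝ] E n1).prod
            ((ContinuousLinearMap.id ℝ (E n2)).prod (0 : E n2 →L[ℝ] E n3)))
            (fderiv ℝ (fun p : E n1 × E n2 × E n3 => f p.1 p.2.1 p.2.2) (p.1, p.2.1, p.2.2.1))
            p.2.2.2 := by
    funext p
    rw [show gradient (fun u' => ℓ p.1 u' p.2.2.1) p.2.1
        = (toDual ℝ (E n2)).symm (fderiv ℝ (fun u' => ℓ p.1 u' p.2.2.1) p.2.1) from rfl,
      (hpℓ p.1 p.2.2.1 p.2.1).fderiv, (hpf p.1 p.2.2.1 p.2.1).fderiv]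
    rfl
  rw [heq]
  apply Differentiable.add
  · exact diff_linmap _ (hL1.comp (by fun_prop))
  · exact Differentiable.clm_apply (diff_linmap _ (hF1.comp (by fun_prop))) (by fun_prop)

lemma diff_Kphi {n1 n3 : ℕ} (φ : E n1 → E n3 → ℝ)
    (hφ : ContDiff ℝ 2 fun p : E n1 × E n3 => φ p.1 p.2) :
    Differentiable ℝ (fun p : E n1 × E n3 => gradient (fun x'' => φ x'' p.2) p.1) := by
  have hΦd : Differentiable ℝ (fun p : E n1 × E n3 => φ p.1 p.2) :=
    hφ.differentiable (by norm_num)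
  have hΦ1 : Differentiable ℝ (fderiv ℝ (fun p : E n1 × E n3 => φ p.1 p.2)) :=
    (hφ.fderiv_right (m := 1) (by norm_num)).differentiable one_ne_zero
  have hpφ : ∀ (c : E n3) (a : E n1), HasFDerivAt (fun x'' => φ x'' c)
      ((fderiv ℝ (fun p : E n1 × E n3 => φ p.1 p.2) (a, c)).comp
        ((ContinuousLinearMap.id ℝ (E n1)).prod 0)) a := fun c a =>
    (hΦd (a, c)).hasFDerivAt.comp (f := fun x => (x, c)) a ((hasFDerivAt_id a).prodMk (hasFDerivAt_const c a))
  have heq : (fun p : E n1 × E n3 => gradient (fun x'' => φ x'' p.2) p.1)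
      = fun p =>
        gradLin2 ((ContinuousLinearMap.id ℝ (E n1)).prod (0 : E n1 →L[ℝ] E n3))
          (fderiv ℝ (fun p : E n1 × E n3 => φ p.1 p.2) (p.1, p.2)) := by
    funext p
    rw [show gradient (fun x'' => φ x'' p.2) p.1
        = (toDual ℝ (E n1)).symm (fderiv ℝ (fun x'' => φ x'' p.2) p.1) from rfl,
      (hpφ p.2 p.1).fderiv]
    rfl
  rw [heq]
  exact diff_linmap _ (hΦ1.comp (by fun_prop))
end Helpers

section Decomp
variable {A B C D R Θ : Type*}
  [NormedAddCommGroup A] [NormedSpace ℝ A] [NormedAddCommGroup B] [NormedSpace ℝ B]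
  [NormedAddCommGroup C] [NormedSpace ℝ C] [NormedAddCommGroup D] [NormedSpace ℝ D]
  [NormedAddCommGroup R] [NormedSpace ℝ R] [NormedAddCommGroup Θ] [NormedSpace ℝ Θ]

lemma fderiv2_decomp (K : A → B → R) (a : Θ → A) (b : Θ → B) (θ₀ : Θ)
    (hK : DifferentiableAt ℝ (fun p : A × B => K p.1 p.2) (a θ₀, b θ₀))
    (ha : DifferentiableAt ℝ a θ₀) (hb : DifferentiableAt ℝ b θ₀) :
    fderiv ℝ (fun θ => K (a θ) (b θ)) θ₀ =
      (fderiv ℝ (fun a' => K a' (b θ₀)) (a θ₀)).comp (fderiv ℝ a θ₀)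
      + (fderiv ℝ (fun b' => K (a θ₀) b') (b θ₀)).comp (fderiv ℝ b θ₀) := by
  have hc : HasFDerivAt (fun θ => ((a θ, b θ) : A × B))
      ((fderiv ℝ a θ₀).prod (fderiv ℝ b θ₀)) θ₀ := ha.hasFDerivAt.prodMk hb.hasFDerivAt
  have hcomp : HasFDerivAt (fun θ => K (a θ) (b θ))
      ((fderiv ℝ (fun p : A × B => K p.1 p.2) (a θ₀, b θ₀)).comp
        ((fderiv ℝ a θ₀).prod (fderiv ℝ b θ₀))) θ₀ := hK.hasFDerivAt.comp (f := fun θ => (a θ, b θ)) θ₀ hc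
  have h1 : HasFDerivAt (fun a' => K a' (b θ₀))
      ((fderiv ℝ (fun p : A × B => K p.1 p.2) (a θ₀, b θ₀)).comp
        ((ContinuousLinearMap.id ℝ A).prod 0)) (a θ₀) :=
    hK.hasFDerivAt.comp (f := fun x => (x, b θ₀)) (a θ₀) ((hasFDerivAt_id (a θ₀)).prodMk (hasFDerivAt_const (b θ₀) (a θ₀)))
  have h2 : HasFDerivAt (fun b' => K (a θ₀) b')
      ((fderiv ℝ (fun p : A × B => K p.1 p.2) (a θ₀, b θ₀)).comp
        ((0 : B →L[ℝ] A).prod (ContinuousLinearMap.id ℝ B))) (b θ₀) :=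
    hK.hasFDerivAt.comp (f := fun x => (a θ₀, x)) (b θ₀) ((hasFDerivAt_const (a θ₀) (b θ₀)).prodMk (hasFDerivAt_id (b θ₀)))
  rw [hcomp.fderiv, h1.fderiv, h2.fderiv]
  refine ContinuousLinearMap.ext fun h => ?_
  simp only [ContinuousLinearMap.coe_comp', Function.comp_apply,
    ContinuousLinearMap.prod_apply, ContinuousLinearMap.add_apply,
    ContinuousLinearMap.coe_id', id_eq, ContinuousLinearMap.zero_apply]
  rw [← map_add]
  congr 1
  simp [Prod.ext_iff]

lemma fderiv3_decomp (K : A → B → C → R) (a : Θ → A) (b : Θ → B) (c : Θ → C) (θ₀ : Θ)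
    (hK : DifferentiableAt ℝ (fun p : A × B × C => K p.1 p.2.1 p.2.2) (a θ₀, b θ₀, c θ₀))
    (ha : DifferentiableAt ℝ a θ₀) (hb : DifferentiableAt ℝ b θ₀)
    (hc : DifferentiableAt ℝ c θ₀) :
    fderiv ℝ (fun θ => K (a θ) (b θ) (c θ)) θ₀ =
      (fderiv ℝ (fun a' => K a' (b θ₀) (c θ₀)) (a θ₀)).comp (fderiv ℝ a θ₀)
      + (fderiv ℝ (fun b' => K (a θ₀) b' (c θ₀)) (b θ₀)).comp (fderiv ℝ b θ₀)
      + (fderiv ℝ (fun c' => K (a θ₀) (b θ₀) c') (c θ₀)).comp (fderiv ℝ c θ₀) := by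
  have hcv : HasFDerivAt (fun θ => ((a θ, b θ, c θ) : A × B × C))
      ((fderiv ℝ a θ₀).prod ((fderiv ℝ b θ₀).prod (fderiv ℝ c θ₀))) θ₀ :=
    ha.hasFDerivAt.prodMk (hb.hasFDerivAt.prodMk hc.hasFDerivAt)
  have hcomp : HasFDerivAt (fun θ => K (a θ) (b θ) (c θ))
      ((fderiv ℝ (fun p : A × B × C => K p.1 p.2.1 p.2.2) (a θ₀, b θ₀, c θ₀)).comp
        ((fderiv ℝ a θ₀).prod ((fderiv ℝ b θ₀).prod (fderiv ℝ c θ₀)))) θ₀ :=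
    hK.hasFDerivAt.comp (f := fun θ => (a θ, b θ, c θ)) θ₀ hcv
  have h1 : HasFDerivAt (fun a' => K a' (b θ₀) (c θ₀))
      ((fderiv ℝ (fun p : A × B × C => K p.1 p.2.1 p.2.2) (a θ₀, b θ₀, c θ₀)).comp
        ((ContinuousLinearMap.id ℝ A).prod 0)) (a θ₀) :=
    hK.hasFDerivAt.comp (f := fun x => (x, b θ₀, c θ₀)) (a θ₀)
      ((hasFDerivAt_id (a θ₀)).prodMk (hasFDerivAt_const (b θ₀, c θ₀) (a θ₀)))
  have h2 : HasFDerivAt (fun b' => K (a θ₀) b' (c θ₀))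
      ((fderiv ℝ (fun p : A × B × C => K p.1 p.2.1 p.2.2) (a θ₀, b θ₀, c θ₀)).comp
        ((0 : B →L[ℝ] A).prod ((ContinuousLinearMap.id ℝ B).prod 0))) (b θ₀) :=
    hK.hasFDerivAt.comp (f := fun x => (a θ₀, x, c θ₀)) (b θ₀) ((hasFDerivAt_const (a θ₀) (b θ₀)).prodMk
      ((hasFDerivAt_id (b θ₀)).prodMk (hasFDerivAt_const (c θ₀) (b θ₀))))
  have h3 : HasFDerivAt (fun c' => K (a θ₀) (b θ₀) c')
      ((fderiv ℝ (fun p : A × B × C => K p.1 p.2.1 p.2.2) (a θ₀, b θ₀, c θ₀)).comp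
        ((0 : C →L[ℝ] A).prod ((0 : C →L[ℝ] B).prod (ContinuousLinearMap.id ℝ C)))) (c θ₀) :=
    hK.hasFDerivAt.comp (f := fun x => (a θ₀, b θ₀, x)) (c θ₀) ((hasFDerivAt_const (a θ₀) (c θ₀)).prodMk
      ((hasFDerivAt_const (b θ₀) (c θ₀)).prodMk (hasFDerivAt_id (c θ₀))))
  rw [hcomp.fderiv, h1.fderiv, h2.fderiv, h3.fderiv]
  refine ContinuousLinearMap.ext fun h => ?_
  simp only [ContinuousLinearMap.coe_comp', Function.comp_apply,
    ContinuousLinearMap.prod_apply, ContinuousLinearMap.add_apply,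
    ContinuousLinearMap.coe_id', id_eq, ContinuousLinearMap.zero_apply]
  rw [← map_add, ← map_add]
  congr 1
  simp [Prod.ext_iff]

lemma fderiv4_decomp (K : A → B → C → D → R) (a : Θ → A) (b : Θ → B) (c : Θ → C) (d : Θ → D)
    (θ₀ : Θ)
    (hK : DifferentiableAt ℝ (fun p : A × B × C × D => K p.1 p.2.1 p.2.2.1 p.2.2.2)
      (a θ₀, b θ₀, c θ₀, d θ₀))
    (ha : DifferentiableAt ℝ a θ₀) (hb : DifferentiableAt ℝ b θ₀)
    (hc : DifferentiableAt ℝ c θ₀) (hd : DifferentiableAt ℝ d θ₀) :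
    fderiv ℝ (fun θ => K (a θ) (b θ) (c θ) (d θ)) θ₀ =
      (fderiv ℝ (fun a' => K a' (b θ₀) (c θ₀) (d θ₀)) (a θ₀)).comp (fderiv ℝ a θ₀)
      + (fderiv ℝ (fun b' => K (a θ₀) b' (c θ₀) (d θ₀)) (b θ₀)).comp (fderiv ℝ b θ₀)
      + (fderiv ℝ (fun c' => K (a θ₀) (b θ₀) c' (d θ₀)) (c θ₀)).comp (fderiv ℝ c θ₀)
      + (fderiv ℝ (fun d' => K (a θ₀) (b θ₀) (c θ₀) d') (d θ₀)).comp (fderiv ℝ d θ₀) := by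
  have hcv : HasFDerivAt (fun θ => ((a θ, b θ, c θ, d θ) : A × B × C × D))
      ((fderiv ℝ a θ₀).prod ((fderiv ℝ b θ₀).prod ((fderiv ℝ c θ₀).prod (fderiv ℝ d θ₀)))) θ₀ :=
    ha.hasFDerivAt.prodMk (hb.hasFDerivAt.prodMk (hc.hasFDerivAt.prodMk hd.hasFDerivAt))
  have hcomp : HasFDerivAt (fun θ => K (a θ) (b θ) (c θ) (d θ))
      ((fderiv ℝ (fun p : A × B × C × D => K p.1 p.2.1 p.2.2.1 p.2.2.2)
          (a θ₀, b θ₀, c θ₀, d θ₀)).comp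
        ((fderiv ℝ a θ₀).prod ((fderiv ℝ b θ₀).prod ((fderiv ℝ c θ₀).prod (fderiv ℝ d θ₀)))))
      θ₀ := hK.hasFDerivAt.comp (f := fun θ => (a θ, b θ, c θ, d θ)) θ₀ hcv
  have h1 : HasFDerivAt (fun a' => K a' (b θ₀) (c θ₀) (d θ₀))
      ((fderiv ℝ (fun p : A × B × C × D => K p.1 p.2.1 p.2.2.1 p.2.2.2)
          (a θ₀, b θ₀, c θ₀, d θ₀)).comp
        ((ContinuousLinearMap.id ℝ A).prod 0)) (a θ₀) :=
    hK.hasFDerivAt.comp (f := fun x => (x, b θ₀, c θ₀, d θ₀)) (a θ₀)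
      ((hasFDerivAt_id (a θ₀)).prodMk (hasFDerivAt_const (b θ₀, c θ₀, d θ₀) (a θ₀)))
  have h2 : HasFDerivAt (fun b' => K (a θ₀) b' (c θ₀) (d θ₀))
      ((fderiv ℝ (fun p : A × B × C × D => K p.1 p.2.1 p.2.2.1 p.2.2.2)
          (a θ₀, b θ₀, c θ₀, d θ₀)).comp
        ((0 : B →L[ℝ] A).prod ((ContinuousLinearMap.id ℝ B).prod 0))) (b θ₀) :=
    hK.hasFDerivAt.comp (f := fun x => (a θ₀, x, c θ₀, d θ₀)) (b θ₀) ((hasFDerivAt_const (a θ₀) (b θ₀)).prodMk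
      ((hasFDerivAt_id (b θ₀)).prodMk (hasFDerivAt_const (c θ₀, d θ₀) (b θ₀))))
  have h3 : HasFDerivAt (fun c' => K (a θ₀) (b θ₀) c' (d θ₀))
      ((fderiv ℝ (fun p : A × B × C × D => K p.1 p.2.1 p.2.2.1 p.2.2.2)
          (a θ₀, b θ₀, c θ₀, d θ₀)).comp
        ((0 : C →L[ℝ] A).prod ((0 : C →L[ℝ] B).prod
          ((ContinuousLinearMap.id ℝ C).prod 0)))) (c θ₀) :=
    hK.hasFDerivAt.comp (f := fun x => (a θ₀, b θ₀, x, d θ₀)) (c θ₀) ((hasFDerivAt_const (a θ₀) (c θ₀)).prodMk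
      ((hasFDerivAt_const (b θ₀) (c θ₀)).prodMk
        ((hasFDerivAt_id (c θ₀)).prodMk (hasFDerivAt_const (d θ₀) (c θ₀)))))
  have h4 : HasFDerivAt (fun d' => K (a θ₀) (b θ₀) (c θ₀) d')
      ((fderiv ℝ (fun p : A × B × C × D => K p.1 p.2.1 p.2.2.1 p.2.2.2)
          (a θ₀, b θ₀, c θ₀, d θ₀)).comp
        ((0 : D →L[ℝ] A).prod ((0 : D →L[ℝ] B).prod
          ((0 : D →L[ℝ] C).prod (ContinuousLinearMap.id ℝ D))))) (d θ₀) :=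
    hK.hasFDerivAt.comp (f := fun x => (a θ₀, b θ₀, c θ₀, x)) (d θ₀) ((hasFDerivAt_const (a θ₀) (d θ₀)).prodMk
      ((hasFDerivAt_const (b θ₀) (d θ₀)).prodMk
        ((hasFDerivAt_const (c θ₀) (d θ₀)).prodMk (hasFDerivAt_id (d θ₀)))))
  rw [hcomp.fderiv, h1.fderiv, h2.fderiv, h3.fderiv, h4.fderiv]
  refine ContinuousLinearMap.ext fun h => ?_
  simp only [ContinuousLinearMap.coe_comp', Function.comp_apply,
    ContinuousLinearMap.prod_apply, ContinuousLinearMap.add_apply,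
    ContinuousLinearMap.coe_id', id_eq, ContinuousLinearMap.zero_apply]
  rw [← map_add, ← map_add, ← map_add]
  congr 1
  simp [Prod.ext_iff]

end Decomp

set_option maxHeartbeats 1000000 in
/-- **Differentiating the KKT conditions yields the Pontryagin differentiable programming
equations (Corollary 4).**  Given a `C¹` family `θ ↦ (x θ k, u θ k, lam θ k)` satisfying the KKT
conditions of the parameterized optimal control problem on a neighborhood `V` of `θ₀`, the
Jacobians `∂x_k = D (x · k)(θ₀)`, `∂u_k = D (u · k)(θ₀)`, `∂λ_k = D (lam · k)(θ₀)` satisfy the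
PDP equations, where the second derivatives `𝓛_xx, 𝓛_xu, 𝓛_ux, 𝓛_uu, 𝓛_xθ, 𝓛_uθ` are those of
the stage Hamiltonian `H⁽ᵏ⁾(x,u,θ) = ℓ(x,u,θ) + ⟪λ_{k+1}(θ₀), f(x,u,θ)⟫`. -/
theorem stmt3 (nx nu nθ N : ℕ)
    (f : E nx → E nu → E nθ → E nx)
    (ℓ : E nx → E nu → E nθ → ℝ)
    (φ : E nx → E nθ → ℝ)
    (ξ : E nθ → E nx)
    (hf : ContDiff ℝ 2 fun p : E nx × E nu × E nθ => f p.1 p.2.1 p.2.2)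
    (hℓ : ContDiff ℝ 2 fun p : E nx × E nu × E nθ => ℓ p.1 p.2.1 p.2.2)
    (hφ : ContDiff ℝ 2 fun p : E nx × E nθ => φ p.1 p.2)
    (hξ : ContDiff ℝ 2 ξ)
    (θ₀ : E nθ)
    (x : E nθ → ℕ → E nx) (u : E nθ → ℕ → E nu) (lam : E nθ → ℕ → E nx)
    (V : Set (E nθ)) (hV : IsOpen V) (hθ₀V : θ₀ ∈ V)
    -- the family is continuously differentiable on `V`
    (hxC : ∀ k ≤ N, ContDiffOn ℝ 1 (fun θ => x θ k) V)
    (huC : ∀ k < N, ContDiffOn ℝ 1 (fun θ => u θ k) V)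
    (hlamC : ∀ k ≤ N, ContDiffOn ℝ 1 (fun θ => lam θ k) V)
    -- KKT conditions hold on `V`
    (hkkt0 : ∀ θ ∈ V, x θ 0 = ξ θ)
    (hkktdyn : ∀ θ ∈ V, ∀ k < N, x θ (k + 1) = f (x θ k) (u θ k) θ)
    (hkktlam : ∀ θ ∈ V, ∀ k < N, lam θ k =
      gradient (fun x' => ℓ x' (u θ k) θ) (x θ k)
        + ContinuousLinearMap.adjoint
            (fderiv ℝ (fun x' => f x' (u θ k) θ) (x θ k)) (lam θ (k + 1)))
    (hkktu : ∀ θ ∈ V, ∀ k < N, (0 : E nu) =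
      gradient (fun u' => ℓ (x θ k) u' θ) (u θ k)
        + ContinuousLinearMap.adjoint
            (fderiv ℝ (fun u' => f (x θ k) u' θ) (u θ k)) (lam θ (k + 1)))
    (hkktN : ∀ θ ∈ V, lam θ N = gradient (fun x' => φ x' θ) (x θ N)) :
    -- ∂x₀ = ξ_θ
    (fderiv ℝ (fun θ => x θ 0) θ₀ = fderiv ℝ ξ θ₀) ∧
    -- ∂x_{k+1} = f_x ∂x_k + f_u ∂u_k + f_θ
    (∀ k < N,
      fderiv ℝ (fun θ => x θ (k + 1)) θ₀ =
        (fderiv ℝ (fun x' => f x' (u θ₀ k) θ₀) (x θ₀ k)).comp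
            (fderiv ℝ (fun θ => x θ k) θ₀)
        + (fderiv ℝ (fun u' => f (x θ₀ k) u' θ₀) (u θ₀ k)).comp
            (fderiv ℝ (fun θ => u θ k) θ₀)
        + fderiv ℝ (fun θ' => f (x θ₀ k) (u θ₀ k) θ') θ₀) ∧
    -- ∂λ_k = 𝓛_xx ∂x_k + 𝓛_xu ∂u_k + f_xᵀ ∂λ_{k+1} + 𝓛_xθ
    (∀ k < N,
      fderiv ℝ (fun θ => lam θ k) θ₀ =
        (fderiv ℝ (fun x' =>
            gradient (fun x'' =>
              ℓ x'' (u θ₀ k) θ₀ + ⟪lam θ₀ (k + 1), f x'' (u θ₀ k) θ₀⟫_ℝ) x') (x θ₀ k)).comp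
          (fderiv ℝ (fun θ => x θ k) θ₀)
        + (fderiv ℝ (fun u' =>
            gradient (fun x'' =>
              ℓ x'' u' θ₀ + ⟪lam θ₀ (k + 1), f x'' u' θ₀⟫_ℝ) (x θ₀ k)) (u θ₀ k)).comp
          (fderiv ℝ (fun θ => u θ k) θ₀)
        + (ContinuousLinearMap.adjoint
            (fderiv ℝ (fun x' => f x' (u θ₀ k) θ₀) (x θ₀ k))).comp
          (fderiv ℝ (fun θ => lam θ (k + 1)) θ₀)
        + fderiv ℝ (fun θ' =>
            gradient (fun x'' =>
              ℓ x'' (u θ₀ k) θ' + ⟪lam θ₀ (k + 1), f x'' (u θ₀ k) θ'⟫_ℝ) (x θ₀ k)) θ₀) ∧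
    -- 0 = 𝓛_ux ∂x_k + 𝓛_uu ∂u_k + f_uᵀ ∂λ_{k+1} + 𝓛_uθ
    (∀ k < N,
      (0 : E nθ →L[ℝ] E nu) =
        (fderiv ℝ (fun x' =>
            gradient (fun u'' =>
              ℓ x' u'' θ₀ + ⟪lam θ₀ (k + 1), f x' u'' θ₀⟫_ℝ) (u θ₀ k)) (x θ₀ k)).comp
          (fderiv ℝ (fun θ => x θ k) θ₀)
        + (fderiv ℝ (fun u' =>
            gradient (fun u'' =>
              ℓ (x θ₀ k) u'' θ₀ + ⟪lam θ₀ (k + 1), f (x θ₀ k) u'' θ₀⟫_ℝ) u') (u θ₀ k)).comp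
          (fderiv ℝ (fun θ => u θ k) θ₀)
        + (ContinuousLinearMap.adjoint
            (fderiv ℝ (fun u' => f (x θ₀ k) u' θ₀) (u θ₀ k))).comp
          (fderiv ℝ (fun θ => lam θ (k + 1)) θ₀)
        + fderiv ℝ (fun θ' =>
            gradient (fun u'' =>
              ℓ (x θ₀ k) u'' θ' + ⟪lam θ₀ (k + 1), f (x θ₀ k) u'' θ'⟫_ℝ) (u θ₀ k)) θ₀) ∧
    -- ∂λ_N = φ_xx ∂x_N + φ_xθ
    (fderiv ℝ (fun θ => lam θ N) θ₀ =
      (fderiv ℝ (fun x' => gradient (fun x'' => φ x'' θ₀) x') (x θ₀ N)).comp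
          (fderiv ℝ (fun θ => x θ N) θ₀)
        + fderiv ℝ (fun θ' => gradient (fun x'' => φ x'' θ') (x θ₀ N)) θ₀) := by
  have hmem : V ∈ nhds θ₀ := hV.mem_nhds hθ₀V
  have hxd : ∀ k, k ≤ N → DifferentiableAt ℝ (fun θ => x θ k) θ₀ := fun k hk =>
    ((hxC k hk).contDiffAt hmem).differentiableAt one_ne_zero
  have hud : ∀ k, k < N → DifferentiableAt ℝ (fun θ => u θ k) θ₀ := fun k hk =>
    ((huC k hk).contDiffAt hmem).differentiableAt one_ne_zero
  have hld : ∀ k, k ≤ N → DifferentiableAt ℝ (fun θ => lam θ k) θ₀ := fun k hk =>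
    ((hlamC k hk).contDiffAt hmem).differentiableAt one_ne_zero
  have hℓdiff : Differentiable ℝ (fun p : E nx × E nu × E nθ => ℓ p.1 p.2.1 p.2.2) :=
    hℓ.differentiable (by norm_num)
  have hfdiff : Differentiable ℝ (fun p : E nx × E nu × E nθ => f p.1 p.2.1 p.2.2) :=
    hf.differentiable (by norm_num)
  have hgd : ∀ (b : E nu) (c : E nθ) (a : E nx), DifferentiableAt ℝ (fun x'' => ℓ x'' b c) a :=
    fun b c a => (hℓdiff (a, b, c)).comp (f := fun x => (x, b, c)) a (differentiableAt_id.prodMk (differentiableAt_const (b, c)))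
  have hfd : ∀ (b : E nu) (c : E nθ) (a : E nx), DifferentiableAt ℝ (fun x'' => f x'' b c) a :=
    fun b c a => (hfdiff (a, b, c)).comp (f := fun x => (x, b, c)) a (differentiableAt_id.prodMk (differentiableAt_const (b, c)))
  have hgd2 : ∀ (a : E nx) (c : E nθ) (b : E nu), DifferentiableAt ℝ (fun u'' => ℓ a u'' c) b :=
    fun a c b => (hℓdiff (a, b, c)).comp (f := fun x => (a, x, c)) b
      ((differentiableAt_const a).prodMk (differentiableAt_id.prodMk (differentiableAt_const c)))
  have hfd2 : ∀ (a : E nx) (c : E nθ) (b : E nu), DifferentiableAt ℝ (fun u'' => f a u'' c) b :=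
    fun a c b => (hfdiff (a, b, c)).comp (f := fun x => (a, x, c)) b
      ((differentiableAt_const a).prodMk (differentiableAt_id.prodMk (differentiableAt_const c)))
  -- differentiability of the uncurried "λ-update" maps
  have hKx := diff_Kx f ℓ hf hℓ
  have hKu := diff_Ku f ℓ hf hℓ
  have hKφ := diff_Kphi φ hφ
  refine ⟨?_, ?_, ?_, ?_, ?_⟩
  · -- initial condition
    have h0 : (fun θ => x θ 0) =ᶠ[nhds θ₀] ξ := by
      filter_upwards [hmem] with θ hθ; exact hkkt0 θ hθ
    exact h0.fderiv_eq
  · -- dynamics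
    intro k hk
    have heq2 : (fun θ => x θ (k + 1)) =ᶠ[nhds θ₀] fun θ => f (x θ k) (u θ k) θ := by
      filter_upwards [hmem] with θ hθ; exact hkktdyn θ hθ k hk
    rw [heq2.fderiv_eq]
    have hdec :
        fderiv ℝ (fun θ => f (x θ k) (u θ k) θ) θ₀ =
          (fderiv ℝ (fun x' => f x' (u θ₀ k) θ₀) (x θ₀ k)).comp (fderiv ℝ (fun θ => x θ k) θ₀)
          + (fderiv ℝ (fun u' => f (x θ₀ k) u' θ₀) (u θ₀ k)).comp (fderiv ℝ (fun θ => u θ k) θ₀)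
          + (fderiv ℝ (fun θ' => f (x θ₀ k) (u θ₀ k) θ') θ₀).comp
              (fderiv ℝ (fun θ : E nθ => θ) θ₀) :=
      fderiv3_decomp f (fun θ => x θ k) (fun θ => u θ k) (fun θ => θ) θ₀
        (hfdiff (x θ₀ k, u θ₀ k, θ₀)) (hxd k hk.le) (hud k hk) differentiableAt_id
    rw [hdec, fderiv_id', ContinuousLinearMap.comp_id]
  · -- costate recursion
    intro k hk
    have heq : (fun θ => lam θ k) =ᶠ[nhds θ₀] fun θ =>
        gradient (fun x' => ℓ x' (u θ k) θ) (x θ k)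
          + ContinuousLinearMap.adjoint
              (fderiv ℝ (fun x' => f x' (u θ k) θ) (x θ k)) (lam θ (k + 1)) := by
      filter_upwards [hmem] with θ hθ; exact hkktlam θ hθ k hk
    rw [heq.fderiv_eq]
    have hdec :
        fderiv ℝ (fun θ =>
          gradient (fun x' => ℓ x' (u θ k) θ) (x θ k)
            + ContinuousLinearMap.adjoint
                (fderiv ℝ (fun x' => f x' (u θ k) θ) (x θ k)) (lam θ (k + 1))) θ₀ =
          (fderiv ℝ (fun a' =>
              gradient (fun x' => ℓ x' (u θ₀ k) θ₀) a'
                + ContinuousLinearMap.adjoint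
                    (fderiv ℝ (fun x' => f x' (u θ₀ k) θ₀) a') (lam θ₀ (k + 1))) (x θ₀ k)).comp
            (fderiv ℝ (fun θ => x θ k) θ₀)
          + (fderiv ℝ (fun b' =>
              gradient (fun x' => ℓ x' b' θ₀) (x θ₀ k)
                + ContinuousLinearMap.adjoint
                    (fderiv ℝ (fun x' => f x' b' θ₀) (x θ₀ k)) (lam θ₀ (k + 1))) (u θ₀ k)).comp
            (fderiv ℝ (fun θ => u θ k) θ₀)
          + (fderiv ℝ (fun c' =>
              gradient (fun x' => ℓ x' (u θ₀ k) c') (x θ₀ k)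
                + ContinuousLinearMap.adjoint
                    (fderiv ℝ (fun x' => f x' (u θ₀ k) c') (x θ₀ k)) (lam θ₀ (k + 1))) θ₀).comp
            (fderiv ℝ (fun θ : E nθ => θ) θ₀)
          + (fderiv ℝ (fun d' =>
              gradient (fun x' => ℓ x' (u θ₀ k) θ₀) (x θ₀ k)
                + ContinuousLinearMap.adjoint
                    (fderiv ℝ (fun x' => f x' (u θ₀ k) θ₀) (x θ₀ k)) d') (lam θ₀ (k + 1))).comp
            (fderiv ℝ (fun θ => lam θ (k + 1)) θ₀) :=
      fderiv4_decomp
        (fun a b c l => gradient (fun x' => ℓ x' b c) a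
          + ContinuousLinearMap.adjoint (fderiv ℝ (fun x' => f x' b c) a) l)
        (fun θ => x θ k) (fun θ => u θ k) (fun θ => θ) (fun θ => lam θ (k + 1)) θ₀
        (hKx (x θ₀ k, u θ₀ k, θ₀, lam θ₀ (k + 1))) (hxd k hk.le) (hud k hk)
        differentiableAt_id (hld (k + 1) hk)
    rw [hdec, fderiv_id', ContinuousLinearMap.comp_id]
    have e1 : (fun a' =>
        gradient (fun x' => ℓ x' (u θ₀ k) θ₀) a'
          + ContinuousLinearMap.adjoint
              (fderiv ℝ (fun x' => f x' (u θ₀ k) θ₀) a') (lam θ₀ (k + 1)))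
        = fun x' => gradient (fun x'' =>
            ℓ x'' (u θ₀ k) θ₀ + ⟪lam θ₀ (k + 1), f x'' (u θ₀ k) θ₀⟫_ℝ) x' :=
      funext fun a' => (gradient_add_inner' _ _ _ _ (hgd _ _ a') (hfd _ _ a')).symm
    have e2 : (fun b' =>
        gradient (fun x' => ℓ x' b' θ₀) (x θ₀ k)
          + ContinuousLinearMap.adjoint
              (fderiv ℝ (fun x' => f x' b' θ₀) (x θ₀ k)) (lam θ₀ (k + 1)))
        = fun u' => gradient (fun x'' =>
            ℓ x'' u' θ₀ + ⟪lam θ₀ (k + 1), f x'' u' θ₀⟫_ℝ) (x θ₀ k) :=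
      funext fun b' => (gradient_add_inner' _ _ _ _ (hgd _ _ _) (hfd _ _ _)).symm
    have e3 : (fun c' =>
        gradient (fun x' => ℓ x' (u θ₀ k) c') (x θ₀ k)
          + ContinuousLinearMap.adjoint
              (fderiv ℝ (fun x' => f x' (u θ₀ k) c') (x θ₀ k)) (lam θ₀ (k + 1)))
        = fun θ' => gradient (fun x'' =>
            ℓ x'' (u θ₀ k) θ' + ⟪lam θ₀ (k + 1), f x'' (u θ₀ k) θ'⟫_ℝ) (x θ₀ k) :=
      funext fun c' => (gradient_add_inner' _ _ _ _ (hgd _ _ _) (hfd _ _ _)).symm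
    have e4 : fderiv ℝ (fun d' =>
        gradient (fun x' => ℓ x' (u θ₀ k) θ₀) (x θ₀ k)
          + ContinuousLinearMap.adjoint
              (fderiv ℝ (fun x' => f x' (u θ₀ k) θ₀) (x θ₀ k)) d') (lam θ₀ (k + 1))
        = ContinuousLinearMap.adjoint (fderiv ℝ (fun x' => f x' (u θ₀ k) θ₀) (x θ₀ k)) := by
      have h := (hasFDerivAt_const
          (gradient (fun x' => ℓ x' (u θ₀ k) θ₀) (x θ₀ k)) (lam θ₀ (k + 1))).fun_add
        ((ContinuousLinearMap.adjoint
          (fderiv ℝ (fun x' => f x' (u θ₀ k) θ₀) (x θ₀ k))).hasFDerivAt)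
      rw [h.fderiv, zero_add]
    rw [e1, e2, e3, e4]
    abel
  · -- stationarity
    intro k hk
    have heq0 : (fun θ =>
        gradient (fun u' => ℓ (x θ k) u' θ) (u θ k)
          + ContinuousLinearMap.adjoint
              (fderiv ℝ (fun u' => f (x θ k) u' θ) (u θ k)) (lam θ (k + 1)))
        =ᶠ[nhds θ₀] fun _ => (0 : E nu) := by
      filter_upwards [hmem] with θ hθ; exact (hkktu θ hθ k hk).symm
    have h0 : fderiv ℝ (fun θ =>
        gradient (fun u' => ℓ (x θ k) u' θ) (u θ k)
          + ContinuousLinearMap.adjoint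
              (fderiv ℝ (fun u' => f (x θ k) u' θ) (u θ k)) (lam θ (k + 1))) θ₀ = 0 := by
      rw [heq0.fderiv_eq]; exact fderiv_const_apply 0
    have hdec :
        fderiv ℝ (fun θ =>
          gradient (fun u' => ℓ (x θ k) u' θ) (u θ k)
            + ContinuousLinearMap.adjoint
                (fderiv ℝ (fun u' => f (x θ k) u' θ) (u θ k)) (lam θ (k + 1))) θ₀ =
          (fderiv ℝ (fun a' =>
              gradient (fun u' => ℓ a' u' θ₀) (u θ₀ k)
                + ContinuousLinearMap.adjoint
                    (fderiv ℝ (fun u' => f a' u' θ₀) (u θ₀ k)) (lam θ₀ (k + 1))) (x θ₀ k)).comp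
            (fderiv ℝ (fun θ => x θ k) θ₀)
          + (fderiv ℝ (fun b' =>
              gradient (fun u' => ℓ (x θ₀ k) u' θ₀) b'
                + ContinuousLinearMap.adjoint
                    (fderiv ℝ (fun u' => f (x θ₀ k) u' θ₀) b') (lam θ₀ (k + 1))) (u θ₀ k)).comp
            (fderiv ℝ (fun θ => u θ k) θ₀)
          + (fderiv ℝ (fun c' =>
              gradient (fun u' => ℓ (x θ₀ k) u' c') (u θ₀ k)
                + ContinuousLinearMap.adjoint
                    (fderiv ℝ (fun u' => f (x θ₀ k) u' c') (u θ₀ k)) (lam θ₀ (k + 1))) θ₀).comp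
            (fderiv ℝ (fun θ : E nθ => θ) θ₀)
          + (fderiv ℝ (fun d' =>
              gradient (fun u' => ℓ (x θ₀ k) u' θ₀) (u θ₀ k)
                + ContinuousLinearMap.adjoint
                    (fderiv ℝ (fun u' => f (x θ₀ k) u' θ₀) (u θ₀ k)) d') (lam θ₀ (k + 1))).comp
            (fderiv ℝ (fun θ => lam θ (k + 1)) θ₀) :=
      fderiv4_decomp
        (fun a b c l => gradient (fun u' => ℓ a u' c) b
          + ContinuousLinearMap.adjoint (fderiv ℝ (fun u' => f a u' c) b) l)
        (fun θ => x θ k) (fun θ => u θ k) (fun θ => θ) (fun θ => lam θ (k + 1)) θ₀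
        (hKu (x θ₀ k, u θ₀ k, θ₀, lam θ₀ (k + 1))) (hxd k hk.le) (hud k hk)
        differentiableAt_id (hld (k + 1) hk)
    rw [fderiv_id', ContinuousLinearMap.comp_id] at hdec
    have e1 : (fun x' => gradient (fun u'' =>
          ℓ x' u'' θ₀ + ⟪lam θ₀ (k + 1), f x' u'' θ₀⟫_ℝ) (u θ₀ k))
        = fun a' => gradient (fun u' => ℓ a' u' θ₀) (u θ₀ k)
            + ContinuousLinearMap.adjoint
                (fderiv ℝ (fun u' => f a' u' θ₀) (u θ₀ k)) (lam θ₀ (k + 1)) :=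
      funext fun a' => gradient_add_inner' _ _ _ _ (hgd2 _ _ _) (hfd2 _ _ _)
    have e2 : (fun u' => gradient (fun u'' =>
          ℓ (x θ₀ k) u'' θ₀ + ⟪lam θ₀ (k + 1), f (x θ₀ k) u'' θ₀⟫_ℝ) u')
        = fun b' => gradient (fun u'' => ℓ (x θ₀ k) u'' θ₀) b'
            + ContinuousLinearMap.adjoint
                (fderiv ℝ (fun u'' => f (x θ₀ k) u'' θ₀) b') (lam θ₀ (k + 1)) :=
      funext fun b' => gradient_add_inner' _ _ _ _ (hgd2 _ _ _) (hfd2 _ _ _)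
    have e3 : (fun θ' => gradient (fun u'' =>
          ℓ (x θ₀ k) u'' θ' + ⟪lam θ₀ (k + 1), f (x θ₀ k) u'' θ'⟫_ℝ) (u θ₀ k))
        = fun c' => gradient (fun u'' => ℓ (x θ₀ k) u'' c') (u θ₀ k)
            + ContinuousLinearMap.adjoint
                (fderiv ℝ (fun u'' => f (x θ₀ k) u'' c') (u θ₀ k)) (lam θ₀ (k + 1)) :=
      funext fun c' => gradient_add_inner' _ _ _ _ (hgd2 _ _ _) (hfd2 _ _ _)
    have e4 : fderiv ℝ (fun d' =>
        gradient (fun u' => ℓ (x θ₀ k) u' θ₀) (u θ₀ k)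
          + ContinuousLinearMap.adjoint
              (fderiv ℝ (fun u' => f (x θ₀ k) u' θ₀) (u θ₀ k)) d') (lam θ₀ (k + 1))
        = ContinuousLinearMap.adjoint (fderiv ℝ (fun u' => f (x θ₀ k) u' θ₀) (u θ₀ k)) := by
      have h := (hasFDerivAt_const
          (gradient (fun u' => ℓ (x θ₀ k) u' θ₀) (u θ₀ k)) (lam θ₀ (k + 1))).fun_add
        ((ContinuousLinearMap.adjoint
          (fderiv ℝ (fun u' => f (x θ₀ k) u' θ₀) (u θ₀ k))).hasFDerivAt)
      rw [h.fderiv, zero_add]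
    rw [e1, e2, e3, ← e4, ← h0, hdec]
    abel
  · -- terminal condition
    have heqN : (fun θ => lam θ N) =ᶠ[nhds θ₀] fun θ => gradient (fun x' => φ x' θ) (x θ N) := by
      filter_upwards [hmem] with θ hθ; exact hkktN θ hθ
    rw [heqN.fderiv_eq]
    have hdec :
        fderiv ℝ (fun θ => gradient (fun x' => φ x' θ) (x θ N)) θ₀ =
          (fderiv ℝ (fun x' => gradient (fun x'' => φ x'' θ₀) x') (x θ₀ N)).comp
            (fderiv ℝ (fun θ => x θ N) θ₀)
          + (fderiv ℝ (fun θ' => gradient (fun x'' => φ x'' θ') (x θ₀ N)) θ₀).comp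
            (fderiv ℝ (fun θ : E nθ => θ) θ₀) :=
      fderiv2_decomp (fun a c => gradient (fun x'' => φ x'' c) a)
        (fun θ => x θ N) (fun θ => θ) θ₀ (hKφ (x θ₀ N, θ₀)) (hxd N le_rfl) differentiableAt_id
    rw [hdec, fderiv_id', ContinuousLinearMap.comp_id]

end
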